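/- The map H_Π(a,b) = (a⁴, (−2 + b + ab)/(a(1 + a − ab))) has (1, √2) as its unique fixed point with a = 1, and its Jacobian matrix at (1, √2) has eigenvalues 4 and 3 + 2√2. -/

import Mathlib

/-- The renormalization operator H_Π. -/
noncomputable def HPi (p : ℝ × ℝ) : ℝ × ℝ :=
  (p.1 ^ 4, (-2 + p.2 + p.1 * p.2) / (p.1 * (1 + p.1 - p.1 * p.2)))

/-- If a linear map on `ℝ²` has lower-triangular matrix with diagonal `4, μ` (μ ≠ 4),
then `4` and `μ` are eigenvalues. -/
lemma eig_helper (L : ℝ × ℝ →L[ℝ] ℝ × ℝ) (μ : ℝ) (hμ : μ ≠ 4)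
    (h1 : (L (1, 0)).1 = 4) (h2 : L (0, 1) = (0, μ)) :
    Module.End.HasEigenvalue (L : ℝ × ℝ →ₗ[ℝ] ℝ × ℝ) 4 ∧
    Module.End.HasEigenvalue (L : ℝ × ℝ →ₗ[ℝ] ℝ × ℝ) μ := by
  have hdecomp : ∀ v : ℝ × ℝ, L v = v.1 • L (1, 0) + v.2 • L (0, 1) := by
    intro v
    have hv : v = v.1 • ((1:ℝ), (0:ℝ)) + v.2 • ((0:ℝ), (1:ℝ)) := by
      ext <;> simp
    calc L v = L (v.1 • ((1:ℝ), (0:ℝ)) + v.2 • ((0:ℝ), (1:ℝ))) := by rw [← hv]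
    _ = v.1 • L (1, 0) + v.2 • L (0, 1) := by
        rw [map_add, map_smul, map_smul]
  set c : ℝ := (L (1, 0)).2 with hc
  have h1' : L (1, 0) = (4, c) := by rw [hc, ← h1]
  constructor
  · refine Module.End.hasEigenvalue_of_hasEigenvector
      (x := ((4 - μ : ℝ), c)) ⟨Module.End.mem_eigenspace_iff.mpr ?_, ?_⟩
    · show L ((4 - μ : ℝ), c) = (4 : ℝ) • ((4 - μ : ℝ), c)
      rw [hdecomp, h1', h2]
      ext <;> simp <;> ring
    · intro h
      have : (4 : ℝ) - μ = 0 := congrArg Prod.fst h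
      exact hμ (by linarith)
  · refine Module.End.hasEigenvalue_of_hasEigenvector
      (x := ((0 : ℝ), (1 : ℝ))) ⟨Module.End.mem_eigenspace_iff.mpr ?_, ?_⟩
    · show L ((0 : ℝ), (1 : ℝ)) = μ • ((0 : ℝ), (1 : ℝ))
      rw [h2]
      ext <;> simp
    · intro h
      have : (1 : ℝ) = 0 := congrArg Prod.snd h
      norm_num at this

theorem HPi_fixed_point_and_eigenvalues :
    HPi (1, Real.sqrt 2) = (1, Real.sqrt 2) ∧
    (∀ b : ℝ, 1 ≤ b → b < 2 → HPi (1, b) = (1, b) → b = Real.sqrt 2) ∧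
    ∃ L : ℝ × ℝ →L[ℝ] ℝ × ℝ, HasFDerivAt HPi L (1, Real.sqrt 2) ∧
      Module.End.HasEigenvalue (L : ℝ × ℝ →ₗ[ℝ] ℝ × ℝ) 4 ∧
      Module.End.HasEigenvalue (L : ℝ × ℝ →ₗ[ℝ] ℝ × ℝ) (3 + 2 * Real.sqrt 2) := by
  have hs2 : Real.sqrt 2 ^ 2 = 2 := Real.sq_sqrt (by norm_num)
  set s := Real.sqrt 2 with hsdef
  have hs1 : 1 < s := by nlinarith [Real.sqrt_nonneg 2]
  have hslt : s < 3/2 := by nlinarith [Real.sqrt_nonneg 2]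
  refine ⟨?_, ?_, ?_⟩
  · simp only [HPi, Prod.mk.injEq]
    constructor
    · norm_num
    · rw [div_eq_iff (by nlinarith : (1:ℝ) * (1 + 1 - 1 * s) ≠ 0)]
      nlinarith
  · intro b hb1 hb2 hfix
    have h := congrArg Prod.snd hfix
    simp only [HPi] at h
    rw [div_eq_iff (by nlinarith : (1:ℝ) * (1 + 1 - 1 * b) ≠ 0)] at h
    have hb2' : b ^ 2 = 2 := by nlinarith
    have : b = Real.sqrt (b ^ 2) := (Real.sqrt_sq (by linarith)).symm
    rw [hb2'] at this
    exact this
  · have hD0 : (fun p : ℝ × ℝ => p.1 * (1 + p.1 - p.1 * p.2)) ((1:ℝ), s) ≠ 0 := by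
      simp only; nlinarith
    have hfst : HasFDerivAt (fun p : ℝ × ℝ => p.1) (ContinuousLinearMap.fst ℝ ℝ ℝ) ((1:ℝ), s) :=
      hasFDerivAt_fst
    have hsnd : HasFDerivAt (fun p : ℝ × ℝ => p.2) (ContinuousLinearMap.snd ℝ ℝ ℝ) ((1:ℝ), s) :=
      hasFDerivAt_snd
    have h1 := ((hfst.mul hfst).mul hfst).mul hfst
    have hN := ((hasFDerivAt_const (-2:ℝ) ((1:ℝ), s)).add hsnd).add (hfst.mul hsnd)
    have hDin := ((hasFDerivAt_const (1:ℝ) ((1:ℝ), s)).add hfst).sub (hfst.mul hsnd)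
    have hD := hfst.mul hDin
    have hInv := (hasDerivAt_inv hD0).comp_hasFDerivAt ((1:ℝ), s) hD
    have hg := hN.mul hInv
    have hL' := HasFDerivAt.prodMk h1 hg
    have hL : HasFDerivAt HPi _ ((1:ℝ), s) := hL'.congr_of_eventuallyEq <| .of_forall fun p => by
      simp only [HPi, div_eq_mul_inv, Function.comp, Pi.mul_apply, Pi.add_apply, Pi.sub_apply]; ring_nf
    obtain ⟨L, hLd, hE1, hE2⟩ : ∃ L : ℝ × ℝ →L[ℝ] ℝ × ℝ, HasFDerivAt HPi L ((1:ℝ), s) ∧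
        (L (1, 0)).1 = 4 ∧ L (0, 1) = (0, 3 + 2 * s) := by
      refine ⟨_, hL, ?_, ?_⟩
      · norm_num
      · ext
        · simp
        · simp
          have h2s : (2:ℝ) - s ≠ 0 := by linarith
          have hr : (1:ℝ) + 1 - s = 2 - s := by ring
          rw [hr]
          field_simp
          nlinarith [hs2]
    obtain ⟨he4, heμ⟩ := eig_helper L (3 + 2 * s) (by nlinarith) hE1 hE2
    exact ⟨L, hLd, he4, heμ⟩
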